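/- Let h ∈ C¹([t₀,∞); ℝ) be nonnegative with locally absolutely continuous derivative, satisfying m·ḧ(t) + γ·ḣ(t) ≤ g(t) for a.e. t, where m, γ > 0 and g ∈ L¹([t₀,∞); ℝ). Then lim_{t→∞} h(t) exists. -/

import Mathlib

open MeasureTheory Filter

/-- Alvarez-type lemma: a nonnegative `C¹` function `h` with locally absolutely
continuous derivative satisfying `m ḧ + γ ḣ ≤ g` a.e. with `g ∈ L¹` has a limit at
infinity. -/
theorem alvarez_lemma
    (m γ : ℝ) (hm : 0 < m) (hγ : 0 < γ) (t₀ : ℝ)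
    (h h' h'' g : ℝ → ℝ)
    (hpos : ∀ t, t₀ ≤ t → 0 ≤ h t)
    (hd : ∀ t, t₀ ≤ t → HasDerivAt h (h' t) t)
    (hd2 : ∀ᵐ t ∂(volume : Measure ℝ), t₀ ≤ t → HasDerivAt h' (h'' t) t)
    (hac : ∀ a b : ℝ, t₀ ≤ a → a ≤ b → h' b - h' a = ∫ s in a..b, h'' s)
    (hg : IntegrableOn g (Set.Ici t₀) volume)
    (hineq : ∀ᵐ t ∂(volume : Measure ℝ), t₀ ≤ t → m * h'' t + γ * h' t ≤ g t) :
    ∃ l : ℝ, Tendsto h atTop (nhds l) := by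
  by_cases hint : ∀ a b : ℝ, t₀ ≤ a → a ≤ b → IntervalIntegrable h'' volume a b
  · -- Main case: h'' is locally interval integrable.
    -- interval integrability of g
    have hg' : ∀ a b : ℝ, t₀ ≤ a → a ≤ b → IntervalIntegrable g volume a b := by
      intro a b ha hab
      rw [intervalIntegrable_iff_integrableOn_Ioc_of_le hab]
      exact hg.mono_set (fun x hx => le_trans ha (le_of_lt hx.1))
    -- h' is continuous on Ici t₀
    have hcont' : ContinuousOn h' (Set.Ici t₀) := by
      have heq : ∀ t ∈ Set.Ici t₀, h' t₀ + ∫ s in t₀..t, h'' s = h' t := by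
        intro t ht; have := hac t₀ t le_rfl ht; linarith
      refine ContinuousOn.congr ?_ (fun t ht => (heq t ht).symm)
      apply ContinuousOn.add continuousOn_const
      intro t ht
      have hmem : Set.Icc t₀ (t+1) ∈ nhdsWithin t (Set.Ici t₀) := by
        rw [← Set.Ici_inter_Iic]
        exact Filter.inter_mem self_mem_nhdsWithin
          (mem_nhdsWithin_of_mem_nhds (Iic_mem_nhds (by linarith [Set.mem_Ici.mp ht])))
      refine ContinuousWithinAt.mono_of_mem_nhdsWithin ?_ hmem
      refine intervalIntegral.continuousWithinAt_primitive (measure_singleton t) ?_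
      rw [min_self]
      exact hint t₀ (max t₀ (t+1)) le_rfl (le_max_left _ _)
    have hcont : ContinuousOn h (Set.Ici t₀) :=
      fun t ht => (hd t ht).continuousAt.continuousWithinAt
    have hii' : ∀ a b : ℝ, t₀ ≤ a → a ≤ b → IntervalIntegrable h' volume a b := by
      intro a b ha hab
      apply ContinuousOn.intervalIntegrable
      apply hcont'.mono
      rw [Set.uIcc_of_le hab]; exact fun x hx => ha.trans hx.1
    have hftc : ∀ a b : ℝ, t₀ ≤ a → a ≤ b → (∫ s in a..b, h' s) = h b - h a := by
      intro a b ha hab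
      apply intervalIntegral.integral_eq_sub_of_hasDerivAt
      · intro t ht; rw [Set.uIcc_of_le hab] at ht; exact hd t (ha.trans ht.1)
      · exact hii' a b ha hab
    set u : ℝ → ℝ := fun t => m * h' t + γ * h t with hu
    have hucont : ContinuousOn u (Set.Ici t₀) :=
      (continuousOn_const.mul hcont').add (continuousOn_const.mul hcont)
    -- the key integrated inequality
    have hkey : ∀ a b : ℝ, t₀ ≤ a → a ≤ b → u b - u a ≤ ∫ s in a..b, g s := by
      intro a b ha hab
      have hI1 : IntervalIntegrable (fun s => m * h'' s) volume a b :=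
        (hint a b ha hab).const_mul m
      have hI2 : IntervalIntegrable (fun s => γ * h' s) volume a b :=
        (hii' a b ha hab).const_mul γ
      have hmono : (∫ s in a..b, (m * h'' s + γ * h' s)) ≤ ∫ s in a..b, g s := by
        apply intervalIntegral.integral_mono_ae_restrict hab (hI1.add hI2) (hg' a b ha hab)
        have h1 : ∀ᵐ t ∂(volume.restrict (Set.Icc a b)), t₀ ≤ t → m * h'' t + γ * h' t ≤ g t :=
          ae_restrict_of_ae hineq
        have h2 : ∀ᵐ t ∂(volume.restrict (Set.Icc a b)), t ∈ Set.Icc a b :=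
          ae_restrict_mem measurableSet_Icc
        filter_upwards [h1, h2] with t hh1 hh2
        exact hh1 (ha.trans hh2.1)
      have hsplit : (∫ s in a..b, (m * h'' s + γ * h' s))
          = m * (h' b - h' a) + γ * (h b - h a) := by
        rw [intervalIntegral.integral_add hI1 hI2, intervalIntegral.integral_const_mul,
          intervalIntegral.integral_const_mul, ← hac a b ha hab, hftc a b ha hab]
      rw [hsplit] at hmono
      simp only [hu]; linarith
    -- bound on the tails of g
    set C := ∫ s in Set.Ioi t₀, |g s| with hCdef
    have habs : IntegrableOn (fun s => |g s|) (Set.Ioi t₀) volume :=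
      (hg.mono_set Set.Ioi_subset_Ici_self).abs
    have hGabs : ∀ a b : ℝ, t₀ ≤ a → a ≤ b → |∫ s in a..b, g s| ≤ C := by
      intro a b ha hab
      calc |∫ s in a..b, g s| ≤ ∫ s in a..b, |g s| :=
            intervalIntegral.abs_integral_le_integral_abs hab
        _ = ∫ s in Set.Ioc a b, |g s| := by rw [intervalIntegral.integral_of_le hab]
        _ ≤ C := by
            apply setIntegral_mono_set habs
            · filter_upwards with x using abs_nonneg _
            · exact HasSubset.Subset.eventuallyLE (fun x hx => lt_of_le_of_lt ha hx.1)
    -- u is bounded below on [t₀, ∞)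
    have hulow : ∃ B : ℝ, ∀ t, t₀ ≤ t → B ≤ u t := by
      by_contra hB
      push_neg at hB
      obtain ⟨T, hT, hTu⟩ := hB (-(C + m))
      have hut : ∀ t, T ≤ t → u t < -m := by
        intro t ht
        have h1 := hkey T t hT ht
        have h2 := (abs_le.mp (hGabs T t hT ht)).2
        linarith
      have hd1 : ∀ t, T ≤ t → h' t ≤ -1 := by
        intro t ht
        have h1 := hut t ht
        simp only [hu] at h1
        have h2 : 0 ≤ γ * h t := mul_nonneg hγ.le (hpos t (hT.trans ht))
        by_contra hcon
        push_neg at hcon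
        have h4 := (mul_lt_mul_iff_right₀ hm).mpr hcon
        rw [mul_neg_one] at h4
        linarith
      set b := T + h T + 1 with hbdef
      have hhT := hpos T hT
      have hTb : T ≤ b := by rw [hbdef]; linarith
      have hint1 := hftc T b hT hTb
      have hle : (∫ s in T..b, h' s) ≤ ∫ s in T..b, (fun _ => (-1:ℝ)) s := by
        apply intervalIntegral.integral_mono_on hTb (hii' T b hT hTb) intervalIntegrable_const
        intro x hx; exact hd1 x hx.1
      rw [hint1, intervalIntegral.integral_const, smul_eq_mul] at hle
      have hb0 := hpos b (hT.trans hTb)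
      have hbT : b - T = h T + 1 := by rw [hbdef]; ring
      rw [hbT] at hle
      linarith
    obtain ⟨B, hB⟩ := hulow
    -- the auxiliary antitone function v
    set G : ℝ → ℝ := fun t => ∫ s in t₀..t, g s with hGdef
    set v : ℝ → ℝ := fun t => u (max t t₀) - G (max t t₀) with hvdef
    have hvant : Antitone v := by
      intro s t hst
      have hs : t₀ ≤ max s t₀ := le_max_right _ _
      have hst' : max s t₀ ≤ max t t₀ := max_le_max hst le_rfl
      have hadd : G (max t t₀) - G (max s t₀) = ∫ x in (max s t₀)..(max t t₀), g x := by
        have := intervalIntegral.integral_add_adjacent_intervals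
          (hg' t₀ (max s t₀) le_rfl hs) (hg' (max s t₀) (max t t₀) hs hst')
        simp only [hGdef]; linarith
      have hk := hkey (max s t₀) (max t t₀) hs hst'
      simp only [hvdef]; linarith
    have hvbdd : BddBelow (Set.range v) := by
      refine ⟨B - C, ?_⟩
      rintro x ⟨t, rfl⟩
      have h1 := hB (max t t₀) (le_max_right _ _)
      have h2 := (abs_le.mp (hGabs t₀ (max t t₀) le_rfl (le_max_right _ _))).2
      simp only [hvdef, hGdef]
      linarith
    have hvlim : Tendsto v atTop (nhds (⨅ t, v t)) := tendsto_atTop_ciInf hvant hvbdd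
    have hGlim : Tendsto G atTop (nhds (∫ s in Set.Ioi t₀, g s)) :=
      intervalIntegral_tendsto_integral_Ioi t₀ (hg.mono_set Set.Ioi_subset_Ici_self) tendsto_id
    set L := (⨅ t, v t) + ∫ s in Set.Ioi t₀, g s with hLdef
    have hulim : Tendsto u atTop (nhds L) := by
      refine Tendsto.congr' ?_ (hvlim.add hGlim)
      filter_upwards [eventually_ge_atTop t₀] with t ht
      simp only [hvdef, max_eq_left ht]
      ring
    -- final step: h tends to L / γ
    refine ⟨L / γ, ?_⟩
    rw [Metric.tendsto_atTop] at hulim ⊢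
    intro ε hε
    obtain ⟨T₀, hT₀⟩ := hulim (γ * ε / 2) (by positivity)
    set T := max T₀ t₀ with hTdef
    have hTt₀ : t₀ ≤ T := le_max_right _ _
    set c := γ / m with hcdef
    have hcpos : 0 < c := div_pos hγ hm
    have hexpder : ∀ s : ℝ, HasDerivAt (fun x => Real.exp (c*x)) (Real.exp (c*s) * c) s := by
      intro s
      simpa using ((hasDerivAt_id s).const_mul c).exp
    have hexpcont : Continuous (fun x : ℝ => Real.exp (c*x)) :=
      Real.continuous_exp.comp (continuous_const.mul continuous_id)
    have hexp : ∀ t, T ≤ t →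
        (∫ s in T..t, Real.exp (c*s)) = (Real.exp (c*t) - Real.exp (c*T))/c := by
      intro t ht
      have hder : ∀ s ∈ Set.uIcc T t, HasDerivAt (fun x => Real.exp (c*x)/c)
          (Real.exp (c*s)) s := by
        intro s _
        have := (hexpder s).div_const c
        simpa [mul_div_assoc, div_self hcpos.ne'] using this
      rw [intervalIntegral.integral_eq_sub_of_hasDerivAt hder
        hexpcont.continuousOn.intervalIntegrable]
      ring
    have hconu : ∀ t, T ≤ t → ContinuousOn u (Set.uIcc T t) := by
      intro t ht
      apply hucont.mono
      rw [Set.uIcc_of_le ht]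
      exact fun x hx => hTt₀.trans hx.1
    -- the variation of constants identity
    have hid : ∀ t, T ≤ t → Real.exp (c*t) * h t - Real.exp (c*T) * h T
        = ∫ s in T..t, Real.exp (c*s) * (u s / m) := by
      intro t ht
      symm
      apply intervalIntegral.integral_eq_sub_of_hasDerivAt
      · intro s hs
        rw [Set.uIcc_of_le ht] at hs
        have hs0 : t₀ ≤ s := hTt₀.trans hs.1
        have hprod := (hexpder s).fun_mul (hd s hs0)
        convert hprod using 1
        · rfl
        simp only [hu, hcdef]
        field_simp
        ring
      · exact (hexpcont.continuousOn.mul ((hconu t ht).div_const m)).intervalIntegrable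
    -- convergence
    have htend : Tendsto (fun t => Real.exp (c*(T-t)) * |h T - L/γ|) atTop (nhds 0) := by
      have l1 : Tendsto (fun t : ℝ => c*(T-t)) atTop atBot := by
        apply Filter.Tendsto.const_mul_atBot hcpos
        apply Filter.tendsto_atBot_add_const_left
        exact tendsto_neg_atTop_atBot
      have l2 : Tendsto (fun t => Real.exp (c*(T-t))) atTop (nhds 0) :=
        Real.tendsto_exp_atBot.comp l1
      simpa using l2.mul_const (|h T - L/γ|)
    obtain ⟨N₁, hN₁⟩ := Filter.eventually_atTop.mp
      (htend.eventually (gt_mem_nhds (half_pos hε)))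
    refine ⟨max N₁ T, ?_⟩
    intro t ht
    have htT : T ≤ t := le_trans (le_max_right _ _) ht
    set R := ∫ s in T..t, Real.exp (c*s) * ((u s - L) / m) with hRdef
    have hI2 : IntervalIntegrable (fun s => Real.exp (c*s) * ((u s - L)/m)) volume T t :=
      (hexpcont.continuousOn.mul (((hconu t htT).sub continuousOn_const).div_const m)).intervalIntegrable
    have hI1 : IntervalIntegrable (fun s => Real.exp (c*s) * (u s/m)) volume T t :=
      (hexpcont.continuousOn.mul ((hconu t htT).div_const m)).intervalIntegrable
    have hsub : (∫ s in T..t, Real.exp (c*s) * (u s / m)) - R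
        = (L/m) * ((Real.exp (c*t) - Real.exp (c*T))/c) := by
      rw [hRdef, ← intervalIntegral.integral_sub hI1 hI2]
      have heq2 : Set.EqOn (fun s => Real.exp (c*s) * (u s / m) - Real.exp (c*s) * ((u s - L)/m))
          (fun s => (L/m) * Real.exp (c*s)) (Set.uIcc T t) := by
        intro s _
        simp only
        field_simp [hm.ne']
        ring
      rw [intervalIntegral.integral_congr heq2, intervalIntegral.integral_const_mul, hexp t htT]
    have hmain : Real.exp (c*t) * h t - Real.exp (c*T) * h T
        = R + (L/γ) * (Real.exp (c*t) - Real.exp (c*T)) := by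
      have h1 := hid t htT
      have h2 : (L/m) * ((Real.exp (c*t) - Real.exp (c*T))/c)
          = (L/γ) * (Real.exp (c*t) - Real.exp (c*T)) := by
        rw [hcdef]; field_simp [hm.ne', hγ.ne']
      rw [h1]
      linarith [hsub, h2]
    -- bound on R
    have hRbd : |R| ≤ ε/2 * Real.exp (c*t) := by
      have hb1 : |R| ≤ ∫ s in T..t, |Real.exp (c*s) * ((u s - L)/m)| := by
        rw [hRdef]
        exact intervalIntegral.abs_integral_le_integral_abs htT
      have hb2 : (∫ s in T..t, |Real.exp (c*s) * ((u s - L)/m)|)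
          ≤ ∫ s in T..t, Real.exp (c*s) * (γ*ε/2/m) := by
        apply intervalIntegral.integral_mono_on htT hI2.abs
          ((hexpcont.continuousOn.mul continuousOn_const).intervalIntegrable)
        intro s hs
        rw [abs_mul, abs_of_pos (Real.exp_pos _)]
        apply mul_le_mul_of_nonneg_left _ (Real.exp_pos _).le
        rw [abs_div, abs_of_pos hm]
        have hds := hT₀ s (le_trans (le_max_left _ _) hs.1)
        rw [Real.dist_eq] at hds
        exact div_le_div_of_nonneg_right hds.le hm.le
      have hb3 : (∫ s in T..t, Real.exp (c*s) * (γ*ε/2/m))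
          = (Real.exp (c*t) - Real.exp (c*T))/c * (γ*ε/2/m) := by
        rw [intervalIntegral.integral_mul_const, hexp t htT]
      have hb4 : (Real.exp (c*t) - Real.exp (c*T))/c * (γ*ε/2/m) ≤ ε/2 * Real.exp (c*t) := by
        have hq : (Real.exp (c*t) - Real.exp (c*T))/c * (γ*ε/2/m)
            = (Real.exp (c*t) - Real.exp (c*T)) * (ε/2) := by
          rw [hcdef]; field_simp [hm.ne', hγ.ne']
        rw [hq]
        nlinarith [Real.exp_pos (c*T)]
      linarith
    -- put everything together
    have e1 : Real.exp (c*(T-t)) * Real.exp (c*t) = Real.exp (c*T) := by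
      rw [← Real.exp_add]; ring_nf
    have e2 : Real.exp (-(c*t)) * Real.exp (c*t) = 1 := by
      rw [← Real.exp_add]; simp
    have hfinal : h t - L/γ = Real.exp (c*(T-t)) * (h T - L/γ) + Real.exp (-(c*t)) * R := by
      have hne := Real.exp_ne_zero (c*t)
      apply mul_right_cancel₀ hne
      have hrhs : (Real.exp (c*(T-t)) * (h T - L/γ) + Real.exp (-(c*t)) * R) * Real.exp (c*t)
          = Real.exp (c*T) * (h T - L/γ) + R := by
        linear_combination (h T - L/γ) * e1 + R * e2
      rw [hrhs]
      linear_combination hmain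
    have hdist : dist (h t) (L/γ) < ε := by
      rw [Real.dist_eq, hfinal]
      have hb5 : |Real.exp (c*(T-t)) * (h T - L/γ) + Real.exp (-(c*t)) * R|
          ≤ Real.exp (c*(T-t)) * |h T - L/γ| + Real.exp (-(c*t)) * |R| := by
        calc |Real.exp (c*(T-t)) * (h T - L/γ) + Real.exp (-(c*t)) * R|
            ≤ |Real.exp (c*(T-t)) * (h T - L/γ)| + |Real.exp (-(c*t)) * R| := abs_add_le _ _
          _ = Real.exp (c*(T-t)) * |h T - L/γ| + Real.exp (-(c*t)) * |R| := by
              rw [abs_mul, abs_mul, abs_of_pos (Real.exp_pos _), abs_of_pos (Real.exp_pos _)]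
      have hb6 : Real.exp (-(c*t)) * |R| ≤ ε/2 := by
        have := mul_le_mul_of_nonneg_left hRbd (Real.exp_pos (-(c*t))).le
        calc Real.exp (-(c*t)) * |R| ≤ Real.exp (-(c*t)) * (ε/2 * Real.exp (c*t)) := this
          _ = ε/2 * (Real.exp (-(c*t)) * Real.exp (c*t)) := by ring
          _ = ε/2 := by rw [e2]; ring
      have hb7 : Real.exp (c*(T-t)) * |h T - L/γ| < ε/2 :=
        hN₁ t (le_trans (le_max_left _ _) ht)
      linarith
    exact hdist
  · -- Degenerate case: `h''` is not locally integrable; then `h'` is eventually constant.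
    push_neg at hint
    obtain ⟨a, b, ha, hab, hni⟩ := hint
    have hconst : ∀ y, b ≤ y → h' y = h' a := by
      intro y hy
      have hni' : ¬ IntervalIntegrable h'' volume a y := by
        intro hI
        refine hni (hI.mono_set ?_)
        rw [Set.uIcc_of_le hab, Set.uIcc_of_le (hab.trans hy)]
        exact Set.Icc_subset_Icc_right hy
      have := hac a y ha (hab.trans hy)
      rw [intervalIntegral.integral_undef hni'] at this
      linarith
    set K := h' a with hK
    -- h y = h b + K (y - b) for y ≥ b
    have hline : ∀ y, b ≤ y → h y = h b + K * (y - b) := by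
      intro y hy
      have hftc : ∫ s in b..y, (fun _ => K) s = h y - h b := by
        apply intervalIntegral.integral_eq_sub_of_hasDerivAt
        · intro t ht
          rw [Set.uIcc_of_le hy] at ht
          have h1 : h' t = K := hconst t ht.1
          have := hd t (ha.trans (hab.trans ht.1))
          rwa [h1] at this
        · exact intervalIntegrable_const
      rw [intervalIntegral.integral_const, smul_eq_mul] at hftc
      linarith
    -- K cannot be negative (h ≥ 0)
    have hK0 : 0 ≤ K := by
      by_contra hKneg
      push_neg at hKneg
      set y := b + (h b + 1) / (-K) with hy
      have hby : b ≤ y := by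
        have : 0 ≤ (h b + 1) / (-K) := by
          apply div_nonneg _ (by linarith)
          have := hpos b (ha.trans hab)
          linarith
        rw [hy]; linarith
      have := hline y hby
      have hyb : y - b = (h b + 1) / (-K) := by rw [hy]; ring
      have : h y = h b + K * ((h b + 1) / (-K)) := by rw [this, hyb]
      have hKne : -K ≠ 0 := by linarith
      have : h y = h b - (h b + 1) := by
        rw [this]; field_simp [neg_ne_zero.mp hKne]; ring
      have := hpos y (ha.trans (hab.trans hby))
      linarith
    -- K cannot be positive (g integrable)
    have hK1 : K ≤ 0 := by
      by_contra hKpos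
      push_neg at hKpos
      -- a.e. on (b, ∞), h'' = 0 and hence γ K ≤ g
      have hae : ∀ᵐ t ∂(volume : Measure ℝ), t ∈ Set.Ioi b → γ * K ≤ g t := by
        filter_upwards [hd2, hineq] with t h1 h2 ht
        have ht' : t₀ ≤ t := ha.trans (hab.trans (le_of_lt ht))
        have hder : HasDerivAt h' (0 : ℝ) t := by
          have : ∀ᶠ s in nhds t, h' s = K := by
            have : Set.Ioi b ∈ nhds t := Ioi_mem_nhds ht
            filter_upwards [this] with s hs
            exact hconst s (le_of_lt hs)
          exact (hasDerivAt_const t K).congr_of_eventuallyEq this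
        have h0 : h'' t = 0 := (h1 ht').unique hder
        have := h2 ht'
        rw [h0, hconst t (le_of_lt ht)] at this
        linarith
      have hgint : IntegrableOn g (Set.Ioi b) volume :=
        hg.mono_set (fun x hx => (ha.trans (hab.trans (le_of_lt hx)) : t₀ ≤ x))
      have hcint : IntegrableOn (fun _ => γ * K) (Set.Ioi b) volume := by
        apply Integrable.mono hgint (aestronglyMeasurable_const)
        rw [ae_restrict_iff' measurableSet_Ioi]
        filter_upwards [hae] with t h1 ht
        have h2 := h1 ht
        rw [Real.norm_eq_abs, Real.norm_eq_abs, abs_of_pos (by positivity : (0:ℝ) < γ * K)]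
        calc γ * K ≤ g t := h2
          _ ≤ |g t| := le_abs_self _
      have h5 := (integrable_const_iff (c := γ * K)).mp hcint
      rcases h5 with hc | hc
      · have : (0:ℝ) < γ * K := by positivity
        linarith
      · rw [isFiniteMeasure_restrict, Real.volume_Ioi] at hc
        exact hc rfl
    have hKz : K = 0 := le_antisymm hK1 hK0
    refine ⟨h b, ?_⟩
    have : h =ᶠ[atTop] fun _ => h b := by
      filter_upwards [eventually_ge_atTop b] with y hy
      rw [hline y hy, hKz]; ring
    exact Tendsto.congr' this.symm tendsto_const_nhds
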